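/- arXiv:1205.2858 — 3 statements merged into one kernel-verified Lean document; each statement's English description precedes it below -/
import Mathlib

section
/- Let Λ be a k-graph. The equivalence relation ∼ on the disjoint union ⨆_{λ ∈ Λ} {λ} × [0, d(λ)] defined by (μ,s) ∼ (ν,t) iff μ(⌊s⌋,⌈s⌉) = ν(⌊t⌋,⌈t⌉) and s − ⌊s⌋ = t − ⌊t⌋ is generated, as an equivalence relation, by the set of pairs {((αλβ, t + d(α)), (λ, t)) : λ ∈ Λ with d(λ) ≤ 1_k, α, β ∈ Λ with s(α) = r(λ) and r(β) = s(λ), and t ∈ [0, d(λ)]}. -/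
/-- A `k`-graph: a countable small category (objects identified with the
identity morphisms, i.e. the morphisms of degree `0`) equipped with a degree
functor `d : Λ → ℕᵏ` satisfying the unique factorization property. -/
structure KGraph (k : ℕ) where
  /-- The morphisms of the category. -/
  Mor : Type
  /-- The category is countable. -/
  countable : Countable Mor
  /-- The source (domain) of a morphism, viewed as a degree-zero morphism. -/
  src : Mor → Mor
  /-- The range (codomain) of a morphism, viewed as a degree-zero morphism. -/
  rng : Mor → Mor
  /-- Composition `comp a b = a ∘ b`, meaningful when `src a = rng b`. -/
  comp : Mor → Mor → Mor
  /-- The degree functor. -/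
  deg : Mor → Fin k → ℕ
  src_src : ∀ a, src (src a) = src a
  rng_src : ∀ a, rng (src a) = src a
  src_rng : ∀ a, src (rng a) = rng a
  rng_rng : ∀ a, rng (rng a) = rng a
  deg_src : ∀ a, deg (src a) = 0
  deg_rng : ∀ a, deg (rng a) = 0
  src_comp : ∀ a b, src a = rng b → src (comp a b) = src b
  rng_comp : ∀ a b, src a = rng b → rng (comp a b) = rng a
  comp_assoc : ∀ a b c, src a = rng b → src b = rng c →
    comp (comp a b) c = comp a (comp b c)
  id_comp : ∀ a, comp (rng a) a = a
  comp_id : ∀ a, comp a (src a) = a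
  deg_comp : ∀ a b, src a = rng b → deg (comp a b) = deg a + deg b
  /-- The unique factorization property. -/
  factor : ∀ (a : Mor) (m n : Fin k → ℕ), deg a = m + n →
    ∃! p : Mor × Mor, deg p.1 = m ∧ deg p.2 = n ∧ src p.1 = rng p.2 ∧
      comp p.1 p.2 = a

namespace KGraph

variable {k : ℕ} (Λ : KGraph k)

/-- The segment `a(m,n)` of a morphism `a`, i.e. the (unique) middle factor of
`a = a(0,m) a(m,n) a(n, d(a))`; junk value `a` if no such factorization exists. -/
noncomputable def seg (a : Λ.Mor) (m n : Fin k → ℕ) : Λ.Mor :=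
  letI := Classical.propDecidable
  if h : ∃ b : Λ.Mor, Λ.deg b = n - m ∧ ∃ x y : Λ.Mor,
      Λ.deg x = m ∧ Λ.src x = Λ.rng b ∧ Λ.src b = Λ.rng y ∧
      a = Λ.comp x (Λ.comp b y)
  then h.choose else a

/-- The points `⨆_{λ ∈ Λ} {λ} × [0, d(λ)]` of which the topological
realization is a quotient; topologized as a disjoint union of subspaces of `ℝᵏ`. -/
def Points : Type :=
  Σ a : Λ.Mor, { t : Fin k → ℝ // ∀ i, 0 ≤ t i ∧ t i ≤ (Λ.deg a i : ℝ) }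

instance : TopologicalSpace Λ.Points :=
  inferInstanceAs (TopologicalSpace
    (Σ a : Λ.Mor, { t : Fin k → ℝ // ∀ i, 0 ≤ t i ∧ t i ≤ (Λ.deg a i : ℝ) }))

/-- Coordinatewise floor `⌊t⌋` (as a vector of naturals; this is the honest
floor on the relevant region `t ≥ 0`). -/
noncomputable def fl (t : Fin k → ℝ) : Fin k → ℕ := fun i => (⌊t i⌋).toNat

/-- Coordinatewise ceiling `⌈t⌉`. -/
noncomputable def ce (t : Fin k → ℝ) : Fin k → ℕ := fun i => (⌈t i⌉).toNat

/-- The fractional part `t - ⌊t⌋`. -/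
noncomputable def frac (t : Fin k → ℝ) : Fin k → ℝ := fun i => t i - ((⌊t i⌋).toNat : ℝ)

/-- The relation `(μ,s) ∼ (ν,t) ⟺ μ(⌊s⌋,⌈s⌉) = ν(⌊t⌋,⌈t⌉)` and
`s - ⌊s⌋ = t - ⌊t⌋` defining the topological realization. -/
def ptRel : Λ.Points → Λ.Points → Prop := fun p q =>
  Λ.seg p.1 (fl p.2.1) (ce p.2.1) = Λ.seg q.1 (fl q.2.1) (ce q.2.1) ∧
    frac p.2.1 = frac q.2.1

/-- `ptRel` is an equivalence relation. -/
def ptSetoid : Setoid Λ.Points where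
  r := Λ.ptRel
  iseqv := ⟨fun _ => ⟨rfl, rfl⟩, fun h => ⟨h.1.symm, h.2.symm⟩,
    fun h h' => ⟨h.1.trans h'.1, h.2.trans h'.2⟩⟩

/-- The topological realization `X_Λ` of the `k`-graph `Λ`. -/
def Real : Type := Quotient Λ.ptSetoid

instance : TopologicalSpace Λ.Real :=
  inferInstanceAs (TopologicalSpace (Quotient Λ.ptSetoid))

/-- The class `[λ, t] ∈ X_Λ` of a pair `(λ, t)` with `0 ≤ t ≤ d(λ)`. -/
def pt (a : Λ.Mor) (t : Fin k → ℝ) (h : ∀ i, 0 ≤ t i ∧ t i ≤ (Λ.deg a i : ℝ)) :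
    Λ.Real :=
  Quotient.mk Λ.ptSetoid ⟨a, ⟨t, h⟩⟩

/-- The open cube `Q_λ = {[λ,t] : t ∈ (0, d(λ))}` of a morphism `λ` (of degree
`≤ (1,…,1)`). -/
def Qcube (lam : Λ.Mor) : Set Λ.Real :=
  { x | ∃ (t : Fin k → ℝ) (h : ∀ i, 0 ≤ t i ∧ t i ≤ (Λ.deg lam i : ℝ)),
      (∀ i, Λ.deg lam i = 1 → 0 < t i ∧ t i < 1) ∧ x = Λ.pt lam t h }

/-- The `r`-skeleton `X_Λ^r` of the topological realization. -/
def skel' (G : KGraph k) : ℕ → Set G.Real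
  | 0 => ⋃ v ∈ { v : G.Mor | G.deg v = 0 }, G.Qcube v
  | (r+1) => skel' G r ∪
      ⋃ lam ∈ { lam : G.Mor | G.deg lam ≤ 1 ∧ ∑ i, G.deg lam i = r + 1 },
        G.Qcube lam

/-- The `r`-skeleton (wrapper). -/
def skel (r : ℕ) : Set Λ.Real := skel' Λ r

/-- A `k`-graph is connected if any two vertices are joined by an undirected
path of morphisms. -/
def Connected : Prop :=
  ∀ u v : Λ.Mor, Λ.deg u = 0 → Λ.deg v = 0 →
    Relation.ReflTransGen (fun x y => ∃ e : Λ.Mor,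
      (Λ.src e = x ∧ Λ.rng e = y) ∨ (Λ.src e = y ∧ Λ.rng e = x)) u v

end KGraph

/-- A morphism of `k`-graphs: a degree-preserving functor. -/
@[ext]
structure KGraphHom {k : ℕ} (Λ Γ : KGraph k) where
  toFun : Λ.Mor → Γ.Mor
  map_src : ∀ a, toFun (Λ.src a) = Γ.src (toFun a)
  map_rng : ∀ a, toFun (Λ.rng a) = Γ.rng (toFun a)
  map_comp : ∀ a b, Λ.src a = Λ.rng b →
    toFun (Λ.comp a b) = Γ.comp (toFun a) (toFun b)
  map_deg : ∀ a, Γ.deg (toFun a) = Λ.deg a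

namespace KGraphHom

variable {k : ℕ} {Λ Γ Θ : KGraph k}

/-- The identity `k`-graph morphism. -/
def id (Λ : KGraph k) : KGraphHom Λ Λ :=
  ⟨fun a => a, fun _ => rfl, fun _ => rfl, fun _ _ _ => rfl, fun _ => rfl⟩

/-- Composition of `k`-graph morphisms. -/
def comp (ψ : KGraphHom Γ Θ) (φ : KGraphHom Λ Γ) : KGraphHom Λ Θ where
  toFun := ψ.toFun ∘ φ.toFun
  map_src a := by simp [Function.comp, φ.map_src, ψ.map_src]
  map_rng a := by simp [Function.comp, φ.map_rng, ψ.map_rng]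
  map_comp a b h := by
    simp only [Function.comp]
    rw [φ.map_comp a b h, ψ.map_comp _ _ (by rw [← φ.map_src, ← φ.map_rng, h])]
  map_deg a := by simp [Function.comp, φ.map_deg, ψ.map_deg]

/-- The induced map on points `(λ, t) ↦ (φ(λ), t)`. -/
def pointMap (φ : KGraphHom Λ Γ) : Λ.Points → Γ.Points :=
  fun p => ⟨φ.toFun p.1, ⟨p.2.1, fun i => by rw [φ.map_deg]; exact p.2.2 i⟩⟩

/-- The induced map `φ̃ : X_Λ → X_Γ` on topological realizations,
`φ̃([λ,t]) = [φ(λ), t]` (defined via choice of representatives). -/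
noncomputable def real (φ : KGraphHom Λ Γ) : Λ.Real → Γ.Real :=
  fun x => Quotient.mk Γ.ptSetoid (φ.pointMap (Quotient.out x))

end KGraphHom

/-- A covering of `k`-graphs: a surjective degree-preserving functor
`p : Ω → Λ` mapping `Ωv` bijectively onto `Λp(v)` and `vΩ` bijectively onto
`p(v)Λ` for every vertex `v` of `Ω`. -/
def KGraphHom.IsCovering {k : ℕ} {Ω Λ : KGraph k} (p : KGraphHom Ω Λ) : Prop :=
  Function.Surjective p.toFun ∧
    ∀ v : Ω.Mor, Ω.deg v = 0 →
      Set.BijOn p.toFun { a | Ω.src a = v } { b | Λ.src b = p.toFun v } ∧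
      Set.BijOn p.toFun { a | Ω.rng a = v } { b | Λ.rng b = p.toFun v }

namespace KGraph

variable {k : ℕ} (Λ : KGraph k)

/-- Uniqueness of the middle factor. -/
theorem seg_unique' {a b x y b' x' y' : Λ.Mor} {m d : Fin k → ℕ}
    (hx : Λ.deg x = m) (hb : Λ.deg b = d) (hxb : Λ.src x = Λ.rng b)
    (hby : Λ.src b = Λ.rng y) (ha : a = Λ.comp x (Λ.comp b y))
    (hx' : Λ.deg x' = m) (hb' : Λ.deg b' = d) (hxb' : Λ.src x' = Λ.rng b')
    (hby' : Λ.src b' = Λ.rng y') (ha' : a = Λ.comp x' (Λ.comp b' y')) :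
    b = b' := by
  have hcby : Λ.deg (Λ.comp b y) = d + Λ.deg y := by
    rw [Λ.deg_comp b y hby, hb]
  have hcby' : Λ.deg (Λ.comp b' y') = d + Λ.deg y' := by
    rw [Λ.deg_comp b' y' hby', hb']
  have hxc : Λ.src x = Λ.rng (Λ.comp b y) := by
    rw [Λ.rng_comp b y hby]; exact hxb
  have hxc' : Λ.src x' = Λ.rng (Λ.comp b' y') := by
    rw [Λ.rng_comp b' y' hby']; exact hxb'
  have hda : Λ.deg a = m + (d + Λ.deg y) := by
    rw [ha, Λ.deg_comp x _ hxc, hx, hcby]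
  have hda' : Λ.deg a = m + (d + Λ.deg y') := by
    rw [ha', Λ.deg_comp x' _ hxc', hx', hcby']
  have hyy : Λ.deg y = Λ.deg y' := by
    have h := hda.symm.trans hda'
    funext i
    have h2 := congrFun h i
    simp only [Pi.add_apply] at h2
    omega
  obtain ⟨P, -, hPuniq⟩ := Λ.factor a m (d + Λ.deg y) hda
  have h1 : (x, Λ.comp b y) = P :=
    hPuniq _ ⟨hx, hcby, hxc, ha.symm⟩
  have h2 : (x', Λ.comp b' y') = P :=
    hPuniq _ ⟨hx', by rw [hcby', hyy], hxc', ha'.symm⟩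
  have hc : Λ.comp b y = Λ.comp b' y' := by
    have := h1.trans h2.symm
    exact congrArg Prod.snd this
  obtain ⟨Q, -, hQuniq⟩ := Λ.factor (Λ.comp b y) d (Λ.deg y) hcby
  have g1 : (b, y) = Q := hQuniq _ ⟨hb, rfl, hby, rfl⟩
  have g2 : (b', y') = Q := hQuniq _ ⟨hb', hyy.symm, hby', hc.symm⟩
  exact congrArg Prod.fst (g1.trans g2.symm)

/-- If a factorization witness exists, `seg` computes the middle factor. -/
theorem seg_spec {a b x y : Λ.Mor} {m n : Fin k → ℕ}
    (hx : Λ.deg x = m) (hb : Λ.deg b = n - m) (hxb : Λ.src x = Λ.rng b)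
    (hby : Λ.src b = Λ.rng y) (ha : a = Λ.comp x (Λ.comp b y)) :
    Λ.seg a m n = b := by
  have hex : ∃ b : Λ.Mor, Λ.deg b = n - m ∧ ∃ x y : Λ.Mor,
      Λ.deg x = m ∧ Λ.src x = Λ.rng b ∧ Λ.src b = Λ.rng y ∧
      a = Λ.comp x (Λ.comp b y) := ⟨b, hb, x, y, hx, hxb, hby, ha⟩
  unfold seg
  rw [dif_pos hex]
  obtain ⟨hb', x', y', hx', hxb', hby', ha'⟩ := hex.choose_spec
  exact Λ.seg_unique' hx' hb' hxb' hby' ha' hx hb hxb hby ha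

/-- Existence of the three-fold factorization for `m ≤ n ≤ deg a`. -/
theorem seg_factor (a : Λ.Mor) (m n : Fin k → ℕ) (hmn : m ≤ n)
    (hn : n ≤ Λ.deg a) :
    ∃ x b y : Λ.Mor, Λ.deg x = m ∧ Λ.deg b = n - m ∧ Λ.deg y = Λ.deg a - n ∧
      Λ.src x = Λ.rng b ∧ Λ.src b = Λ.rng y ∧
      a = Λ.comp x (Λ.comp b y) := by
  have h1 : Λ.deg a = m + (Λ.deg a - m) := by
    funext i
    have h : m i ≤ Λ.deg a i := le_trans (hmn i) (hn i)
    simp only [Pi.add_apply, Pi.sub_apply]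
    omega
  obtain ⟨⟨x, c⟩, ⟨hx, hc, hxc, hxc2⟩, -⟩ := Λ.factor a m (Λ.deg a - m) h1
  have h2 : Λ.deg c = (n - m) + (Λ.deg a - n) := by
    rw [hc]; funext i
    have h3 : m i ≤ n i := hmn i
    have h4 : n i ≤ Λ.deg a i := hn i
    simp only [Pi.add_apply, Pi.sub_apply]
    omega
  obtain ⟨⟨b, y⟩, ⟨hbd, hyd, hby, hby2⟩, -⟩ :=
    Λ.factor c (n - m) (Λ.deg a - n) h2
  refine ⟨x, b, y, hx, hbd, hyd, ?_, hby, ?_⟩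
  · rw [hxc, ← hby2, Λ.rng_comp b y hby]
  · rw [hby2, hxc2]

/-- A generating pair is related by `ptRel`. -/
theorem rel_to_ptRel (p q : Λ.Points)
    (h : Λ.deg q.1 ≤ 1 ∧ ∃ α β : Λ.Mor, Λ.src α = Λ.rng q.1 ∧
        Λ.rng β = Λ.src q.1 ∧ p.1 = Λ.comp α (Λ.comp q.1 β) ∧
        (∀ i, p.2.1 i = q.2.1 i + (Λ.deg α i : ℝ))) :
    Λ.ptRel p q := by
  obtain ⟨μ, s, hs⟩ := p
  obtain ⟨lam, t, ht⟩ := q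
  obtain ⟨hdeg, α, β, hα, hβ, hcomp, hst⟩ := h
  simp only at hα hβ hcomp hst hdeg ⊢
  -- floor/ceiling arithmetic
  have htf : ∀ i, (0:ℤ) ≤ ⌊t i⌋ := fun i => Int.floor_nonneg.mpr (ht i).1
  have htc : ∀ i, (0:ℤ) ≤ ⌈t i⌉ := fun i => Int.ceil_nonneg (ht i).1
  have hfl : ∀ i, fl s i = fl t i + Λ.deg α i := by
    intro i
    simp only [fl, hst i, Int.floor_add_natCast]
    have := htf i; omega
  have hce : ∀ i, ce s i = ce t i + Λ.deg α i := by
    intro i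
    simp only [ce, hst i, Int.ceil_add_natCast]
    have := htc i; omega
  have hfrac : frac s = frac t := by
    funext i
    simp only [frac, hst i, Int.floor_add_natCast]
    have h0 : ((⌊t i⌋ + (Λ.deg α i : ℤ)).toNat : ℝ)
        = (⌊t i⌋.toNat : ℝ) + (Λ.deg α i : ℝ) := by
      have := htf i
      have : (⌊t i⌋ + (Λ.deg α i : ℤ)).toNat = ⌊t i⌋.toNat + Λ.deg α i := by
        omega
      rw [this]; push_cast; ring
    rw [h0]; ring
  -- factor the middle of `lam`
  have hle : fl t ≤ ce t := fun i => Int.toNat_le_toNat (Int.floor_le_ceil _)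
  have hub : ce t ≤ Λ.deg lam := by
    intro i
    have h1 : ⌈t i⌉ ≤ (Λ.deg lam i : ℤ) := by
      apply Int.ceil_le.mpr
      exact_mod_cast (ht i).2
    simp only [ce]; omega
  obtain ⟨x, b, y, hx, hb, hy, hxb, hby, hfac⟩ :=
    Λ.seg_factor lam (fl t) (ce t) hle hub
  have hseg_t : Λ.seg lam (fl t) (ce t) = b :=
    Λ.seg_spec hx hb hxb hby hfac
  -- bookkeeping of sources/ranges
  have hx_bc : Λ.src x = Λ.rng (Λ.comp b y) := by
    rw [Λ.rng_comp b y hby]; exact hxb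
  have rlam : Λ.rng lam = Λ.rng x := by rw [hfac, Λ.rng_comp _ _ hx_bc]
  have slam : Λ.src lam = Λ.src y := by
    rw [hfac, Λ.src_comp _ _ hx_bc, Λ.src_comp _ _ hby]
  have hαx : Λ.src α = Λ.rng x := hα.trans rlam
  have hyβ : Λ.src y = Λ.rng β := (hβ.trans slam).symm
  have hbyβ : Λ.src b = Λ.rng (Λ.comp y β) := by
    rw [Λ.rng_comp y β hyβ]; exact hby
  have hxW : Λ.src x = Λ.rng (Λ.comp b (Λ.comp y β)) := by
    rw [Λ.rng_comp _ _ hbyβ]; exact hxb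
  have hbyB : Λ.src (Λ.comp b y) = Λ.rng β := by
    rw [Λ.src_comp b y hby]; exact hyβ
  -- refactor μ
  have hμ : μ = Λ.comp (Λ.comp α x) (Λ.comp b (Λ.comp y β)) := by
    rw [hcomp, hfac, Λ.comp_assoc x (Λ.comp b y) β hx_bc hbyB,
      Λ.comp_assoc b y β hby hyβ, ← Λ.comp_assoc α x _ hαx hxW]
  have hαx_deg : Λ.deg (Λ.comp α x) = fl s := by
    rw [Λ.deg_comp α x hαx, hx]
    funext i
    simp [hfl i, Nat.add_comm]
  have hb_deg : Λ.deg b = ce s - fl s := by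
    rw [hb]; funext i
    simp only [Pi.sub_apply, hfl i, hce i]
    omega
  have hαx_src : Λ.src (Λ.comp α x) = Λ.rng b := by
    rw [Λ.src_comp α x hαx]; exact hxb
  have hseg_s : Λ.seg μ (fl s) (ce s) = b :=
    Λ.seg_spec hαx_deg hb_deg hαx_src hbyβ hμ
  exact ⟨hseg_s.trans hseg_t.symm, hfrac⟩

/-- Every point is generator-related to its canonical middle-segment point. -/
theorem proj (p : Λ.Points) :
    ∃ z : Λ.Points, z.1 = Λ.seg p.1 (fl p.2.1) (ce p.2.1) ∧
      z.2.1 = frac p.2.1 ∧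
      (Λ.deg z.1 ≤ 1 ∧ ∃ α β : Λ.Mor, Λ.src α = Λ.rng z.1 ∧
        Λ.rng β = Λ.src z.1 ∧ p.1 = Λ.comp α (Λ.comp z.1 β) ∧
        (∀ i, p.2.1 i = z.2.1 i + (Λ.deg α i : ℝ))) := by
  obtain ⟨μ, s, hs⟩ := p
  have hsf : ∀ i, (0:ℤ) ≤ ⌊s i⌋ := fun i => Int.floor_nonneg.mpr (hs i).1
  have hle : fl s ≤ ce s := fun i => Int.toNat_le_toNat (Int.floor_le_ceil _)
  have hub : ce s ≤ Λ.deg μ := by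
    intro i
    have h1 : ⌈s i⌉ ≤ (Λ.deg μ i : ℤ) := by
      apply Int.ceil_le.mpr
      exact_mod_cast (hs i).2
    simp only [ce]; omega
  obtain ⟨x, b, y, hx, hb, hy, hxb, hby, hfac⟩ :=
    Λ.seg_factor μ (fl s) (ce s) hle hub
  have hseg : Λ.seg μ (fl s) (ce s) = b := Λ.seg_spec hx hb hxb hby hfac
  have hflcast : ∀ i, ((⌊s i⌋.toNat : ℕ) : ℝ) = (⌊s i⌋ : ℝ) := by
    intro i
    have := Int.toNat_of_nonneg (hsf i)
    exact_mod_cast congrArg (Int.cast : ℤ → ℝ) this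
  have hbound : ∀ i, 0 ≤ frac s i ∧ frac s i ≤ (Λ.deg b i : ℝ) := by
    intro i
    have hdb : ((Λ.deg b i : ℕ) : ℝ) = (⌈s i⌉ : ℝ) - (⌊s i⌋ : ℝ) := by
      have h1 : Λ.deg b i = ce s i - fl s i := by rw [hb]; rfl
      have h2 : ((ce s i - fl s i : ℕ) : ℝ)
          = ((ce s i : ℕ) : ℝ) - ((fl s i : ℕ) : ℝ) := by
        rw [Nat.cast_sub (hle i)]
      have h3 : ((ce s i : ℕ) : ℝ) = (⌈s i⌉ : ℝ) := by
        have := Int.toNat_of_nonneg (Int.ceil_nonneg (hs i).1)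
        exact_mod_cast congrArg (Int.cast : ℤ → ℝ) this
      have h4 : ((fl s i : ℕ) : ℝ) = (⌊s i⌋ : ℝ) := hflcast i
      rw [h1, h2, h3, h4]
    constructor
    · simp only [frac]
      rw [hflcast i]
      have := Int.floor_le (s i)
      linarith
    · simp only [frac]
      rw [hflcast i, hdb]
      have := Int.le_ceil (s i)
      linarith
  refine ⟨⟨b, ⟨frac s, hbound⟩⟩, hseg.symm, rfl, ?_, x, y, hxb, hby.symm,
    hfac, ?_⟩
  · intro i
    have h1 : ⌈s i⌉ ≤ ⌊s i⌋ + 1 := Int.ceil_le_floor_add_one _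
    have h2 : Λ.deg b i = ce s i - fl s i := by rw [hb]; rfl
    simp only [Pi.one_apply, h2, fl, ce]
    have := hsf i; omega
  · intro i
    simp only [frac, hx, fl]
    ring

end KGraph

/-- The equivalence relation `∼` on `⨆_{λ ∈ Λ} {λ} × [0, d(λ)]`
defined by `(μ,s) ∼ (ν,t) ⟺ μ(⌊s⌋,⌈s⌉) = ν(⌊t⌋,⌈t⌉) ∧ s - ⌊s⌋ = t - ⌊t⌋` is
generated, as an equivalence relation, by the set of pairs
`{((αλβ, t + d(α)), (λ, t)) : d(λ) ≤ 1_k, s(α) = r(λ), r(β) = s(λ), t ∈ [0, d(λ)]}`. -/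
theorem topological_realization_relation_generated
    (k : ℕ) (Λ : KGraph k) :
    Λ.ptRel = Relation.EqvGen (fun p q : Λ.Points =>
      Λ.deg q.1 ≤ 1 ∧
      ∃ α β : Λ.Mor, Λ.src α = Λ.rng q.1 ∧ Λ.rng β = Λ.src q.1 ∧
        p.1 = Λ.comp α (Λ.comp q.1 β) ∧
        (∀ i, p.2.1 i = q.2.1 i + (Λ.deg α i : ℝ))) := by
  funext p q
  apply propext
  constructor
  · intro h
    obtain ⟨z, hz1, hz2, hzR⟩ := Λ.proj p
    obtain ⟨z', hz1', hz2', hzR'⟩ := Λ.proj q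
    have hzz : z = z' := by
      obtain ⟨a, u, hu⟩ := z
      obtain ⟨a', u', hu'⟩ := z'
      simp only at hz1 hz2 hz1' hz2'
      have ha : a = a' := by rw [hz1, hz1', h.1]
      subst ha
      have huu : u = u' := by rw [hz2, hz2', h.2]
      subst huu
      rfl
    exact Relation.EqvGen.trans _ _ _ (Relation.EqvGen.rel _ _ hzR)
      (Relation.EqvGen.symm _ _ (Relation.EqvGen.rel _ _ (hzz ▸ hzR')))
  · intro h
    induction h with
    | rel x y hxy => exact Λ.rel_to_ptRel x y hxy
    | refl x => exact ⟨rfl, rfl⟩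
    | symm x y _ ih => exact ⟨ih.1.symm, ih.2.symm⟩
    | trans x y z _ _ ih1 ih2 => exact ⟨ih1.1.trans ih2.1, ih1.2.trans ih2.2⟩
end

section
/- Let Λ be a k-graph with topological realization X_Λ. For each m ≤ 1_k and λ ∈ Λ^m, the closure of Q_λ in X_Λ equals {[λ,t] : 0 ≤ t ≤ m}. Moreover, defining X_Λ^0 = ⋃_{v ∈ Λ^0} Q_v and recursively X_Λ^{r+1} = X_Λ^r ∪ ⋃ {Q_λ : d(λ) ≤ 1_k, |d(λ)| = r+1}, a subset U of X_Λ is open if and only if U ∩ X_Λ^r is relatively open in X_Λ^r for each r ≤ k. -/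
namespace KGraph

variable {k : ℕ} {Λ : KGraph k}

/-- The defining predicate for `b = a(m,n)`. -/
def IsSeg (Λ : KGraph k) (a : Λ.Mor) (m n : Fin k → ℕ) (b : Λ.Mor) : Prop :=
  Λ.deg b = n - m ∧ ∃ x y : Λ.Mor,
    Λ.deg x = m ∧ Λ.src x = Λ.rng b ∧ Λ.src b = Λ.rng y ∧
    a = Λ.comp x (Λ.comp b y)

lemma IsSeg.unique {a b b' : Λ.Mor} {m n : Fin k → ℕ}
    (h : Λ.IsSeg a m n b) (h' : Λ.IsSeg a m n b') : b = b' := by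
  obtain ⟨hb, x, y, hx, hxb, hby, ha⟩ := h
  obtain ⟨hb', x', y', hx', hxb', hby', ha'⟩ := h'
  have hcy : Λ.rng (Λ.comp b y) = Λ.rng b := Λ.rng_comp _ _ hby
  have hcy' : Λ.rng (Λ.comp b' y') = Λ.rng b' := Λ.rng_comp _ _ hby'
  have e1 : Λ.deg a = m + ((n - m) + Λ.deg y) := by
    rw [ha, Λ.deg_comp _ _ (hxb.trans hcy.symm), Λ.deg_comp _ _ hby, hx, hb]
  have e2 : Λ.deg a = m + ((n - m) + Λ.deg y') := by
    rw [ha', Λ.deg_comp _ _ (hxb'.trans hcy'.symm), Λ.deg_comp _ _ hby', hx', hb']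
  have hdy : Λ.deg y = Λ.deg y' := by
    have h3 := e1.symm.trans e2
    funext i
    have h4 := congrFun h3 i
    simp only [Pi.add_apply] at h4
    omega
  have hfac := Λ.factor a m ((n - m) + Λ.deg y) e1
  have hp : ((x, Λ.comp b y) : Λ.Mor × Λ.Mor) = (x', Λ.comp b' y') :=
    hfac.unique
      ⟨hx, by rw [Λ.deg_comp _ _ hby, hb], hxb.trans hcy.symm, ha.symm⟩
      ⟨hx', by rw [Λ.deg_comp _ _ hby', hb', hdy], hxb'.trans hcy'.symm, ha'.symm⟩
  have hcc : Λ.comp b y = Λ.comp b' y' := congrArg Prod.snd hp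
  have hfac2 := Λ.factor (Λ.comp b y) (n - m) (Λ.deg y)
    (by rw [Λ.deg_comp _ _ hby, hb])
  have hq : ((b, y) : Λ.Mor × Λ.Mor) = (b', y') :=
    hfac2.unique ⟨hb, rfl, hby, rfl⟩ ⟨hb', hdy.symm, hby', hcc.symm⟩
  exact congrArg Prod.fst hq

lemma isSeg_seg_of_exists {a : Λ.Mor} {m n : Fin k → ℕ}
    (h : ∃ b, Λ.IsSeg a m n b) : Λ.IsSeg a m n (Λ.seg a m n) := by
  classical
  have h' : ∃ b : Λ.Mor, Λ.deg b = n - m ∧ ∃ x y : Λ.Mor,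
      Λ.deg x = m ∧ Λ.src x = Λ.rng b ∧ Λ.src b = Λ.rng y ∧
      a = Λ.comp x (Λ.comp b y) := h
  rw [seg, dif_pos h']
  exact h'.choose_spec

lemma IsSeg.seg_eq {a b : Λ.Mor} {m n : Fin k → ℕ}
    (hb : Λ.IsSeg a m n b) : Λ.seg a m n = b :=
  (isSeg_seg_of_exists ⟨b, hb⟩).unique hb

lemma exists_isSeg {a : Λ.Mor} {m n : Fin k → ℕ}
    (hmn : m ≤ n) (hna : n ≤ Λ.deg a) : ∃ b, Λ.IsSeg a m n b := by
  have e1 : Λ.deg a = m + (Λ.deg a - m) := by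
    funext i
    have h1 : m i ≤ n i := hmn i
    have h2 : n i ≤ Λ.deg a i := hna i
    simp only [Pi.add_apply, Pi.sub_apply]; omega
  obtain ⟨⟨x, c⟩, ⟨hx, hc, hxc, hcomp⟩, -⟩ := Λ.factor a m (Λ.deg a - m) e1
  have e2 : Λ.deg c = (n - m) + (Λ.deg a - n) := by
    rw [hc]; funext i
    have h1 : m i ≤ n i := hmn i
    have h2 : n i ≤ Λ.deg a i := hna i
    simp only [Pi.add_apply, Pi.sub_apply]; omega
  obtain ⟨⟨b, y⟩, ⟨hbd, hyd, hby, hcomp2⟩, -⟩ := Λ.factor c (n - m) (Λ.deg a - n) e2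
  refine ⟨b, hbd, x, y, hx, ?_, hby, ?_⟩
  · rw [hxc, ← hcomp2, Λ.rng_comp _ _ hby]
  · rw [← hcomp, hcomp2]

lemma isSeg_seg {a : Λ.Mor} {m n : Fin k → ℕ}
    (hmn : m ≤ n) (hna : n ≤ Λ.deg a) : Λ.IsSeg a m n (Λ.seg a m n) :=
  isSeg_seg_of_exists (exists_isSeg hmn hna)

lemma deg_seg {a : Λ.Mor} {m n : Fin k → ℕ}
    (hmn : m ≤ n) (hna : n ≤ Λ.deg a) : Λ.deg (Λ.seg a m n) = n - m :=
  (isSeg_seg hmn hna).1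

lemma seg_zero_deg (a : Λ.Mor) : Λ.seg a 0 (Λ.deg a) = a := by
  refine IsSeg.seg_eq ⟨by simp, Λ.rng a, Λ.src a, Λ.deg_rng a, ?_, ?_, ?_⟩
  · rw [Λ.src_rng]
  · rw [Λ.rng_src]
  · rw [Λ.comp_id, Λ.id_comp]

lemma seg_seg {a : Λ.Mor} {m m' n' n : Fin k → ℕ}
    (h1 : m ≤ m') (h2 : m' ≤ n') (h3 : n' ≤ n) (h4 : n ≤ Λ.deg a) :
    Λ.seg (Λ.seg a m n) (m' - m) (n' - m) = Λ.seg a m' n' := by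
  obtain ⟨hbd, x, y, hx, hxb, hby, ha⟩ := isSeg_seg (h1.trans (h2.trans h3)) h4
  set b := Λ.seg a m n with hbdef
  have hsub1 : m' - m ≤ n' - m := fun i => by
    have e : m' i ≤ n' i := h2 i
    simp only [Pi.sub_apply]; omega
  have hsub2 : n' - m ≤ Λ.deg b := by
    rw [hbd]; intro i
    have ea : m i ≤ m' i := h1 i
    have eb : m' i ≤ n' i := h2 i
    have ec : n' i ≤ n i := h3 i
    simp only [Pi.sub_apply]; omega
  obtain ⟨hcd, u, w, hu, huc, hcw, hbeq⟩ := isSeg_seg hsub1 hsub2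
  set c := Λ.seg b (m' - m) (n' - m) with hcdef
  have hcd' : Λ.deg c = n' - m' := by
    rw [hcd]; funext i
    have ea : m i ≤ m' i := h1 i
    have eb : m' i ≤ n' i := h2 i
    simp only [Pi.sub_apply]; omega
  have hucw : Λ.src u = Λ.rng (Λ.comp c w) := by
    rw [Λ.rng_comp _ _ hcw]; exact huc
  have hsw : Λ.src w = Λ.rng y := by
    have hsb : Λ.src b = Λ.src w := by
      rw [hbeq, Λ.src_comp _ _ hucw, Λ.src_comp _ _ hcw]
    rw [← hsb, hby]
  have hrb : Λ.rng b = Λ.rng u := by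
    rw [hbeq, Λ.rng_comp _ _ hucw]
  have hcwy : Λ.src (Λ.comp c w) = Λ.rng y := by
    rw [Λ.src_comp _ _ hcw]; exact hsw
  have hcwy2 : Λ.src c = Λ.rng (Λ.comp w y) := by
    rw [Λ.rng_comp _ _ hsw]; exact hcw
  have hsuZ : Λ.src u = Λ.rng (Λ.comp c (Λ.comp w y)) := by
    rw [Λ.rng_comp _ _ hcwy2]; exact huc
  refine (IsSeg.seg_eq (a := a) (m := m') (n := n')
    ⟨hcd', Λ.comp x u, Λ.comp w y, ?_, ?_, ?_, ?_⟩).symm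
  · rw [Λ.deg_comp _ _ (hxb.trans hrb), hx, hu]
    funext i
    have ea : m i ≤ m' i := h1 i
    simp only [Pi.add_apply, Pi.sub_apply]; omega
  · rw [Λ.src_comp _ _ (hxb.trans hrb)]; exact huc
  · rw [Λ.rng_comp _ _ hsw]; exact hcw
  · rw [ha, hbeq,
      Λ.comp_assoc u (Λ.comp c w) y hucw hcwy,
      Λ.comp_assoc c w y hcw hsw,
      ← Λ.comp_assoc x u (Λ.comp c (Λ.comp w y)) (hxb.trans hrb) hsuZ]


/-! ### Floor/ceiling helpers -/

lemma toNat_cast_real {z : ℤ} (h : 0 ≤ z) : ((z.toNat : ℕ) : ℝ) = (z : ℝ) := by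
  exact_mod_cast Int.toNat_of_nonneg h

lemma flR_le {x : ℝ} (hx : 0 ≤ x) : ((⌊x⌋.toNat : ℕ) : ℝ) ≤ x := by
  rw [toNat_cast_real (Int.floor_nonneg.2 hx)]; exact Int.floor_le x

lemma le_ceR {x : ℝ} (hx : 0 ≤ x) : x ≤ ((⌈x⌉.toNat : ℕ) : ℝ) := by
  rw [toNat_cast_real (Int.ceil_nonneg hx)]; exact Int.le_ceil x

lemma fl_le_ce (x : ℝ) : ⌊x⌋.toNat ≤ ⌈x⌉.toNat := by
  have := Int.floor_le_ceil x; omega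

lemma ce_le_of_le {x : ℝ} {N : ℕ} (h : x ≤ (N : ℝ)) : ⌈x⌉.toNat ≤ N := by
  have : ⌈x⌉ ≤ (N : ℤ) := Int.ceil_le.2 (by exact_mod_cast h)
  omega

lemma le_fl_of_le {x : ℝ} {M : ℕ} (h : (M : ℝ) ≤ x) : M ≤ ⌊x⌋.toNat := by
  have : (M : ℤ) ≤ ⌊x⌋ := Int.le_floor.2 (by exact_mod_cast h)
  omega

lemma ce_le_fl_add_one {x : ℝ} (hx : 0 ≤ x) : ⌈x⌉.toNat ≤ ⌊x⌋.toNat + 1 := by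
  have h1 := Int.ceil_le_floor_add_one x
  have h2 := Int.floor_nonneg.2 hx
  omega

lemma sub_fl_lt_one (x : ℝ) {hx : 0 ≤ x} : x - ((⌊x⌋.toNat : ℕ) : ℝ) < 1 := by
  rw [toNat_cast_real (Int.floor_nonneg.2 hx)]
  have := Int.lt_floor_add_one x; linarith

lemma ce_eq_fl_of_frac_eq_zero {x : ℝ} (hx : 0 ≤ x)
    (h : x - ((⌊x⌋.toNat : ℕ) : ℝ) = 0) : ⌈x⌉.toNat = ⌊x⌋.toNat := by
  have hxe : x = ((⌊x⌋.toNat : ℕ) : ℝ) := by linarith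
  rw [hxe, Int.ceil_natCast, Int.floor_natCast]

lemma ce_eq_fl_add_one_of_frac_pos {x : ℝ} (hx : 0 ≤ x)
    (h : 0 < x - ((⌊x⌋.toNat : ℕ) : ℝ)) : ⌈x⌉.toNat = ⌊x⌋.toNat + 1 := by
  have h2 : 0 ≤ ⌊x⌋ := Int.floor_nonneg.2 hx
  have h3 : ((⌊x⌋ : ℤ) : ℝ) < x := by
    rw [← toNat_cast_real h2]; linarith
  have h4 : ((⌊x⌋ : ℤ) : ℝ) < ((⌈x⌉ : ℤ) : ℝ) := lt_of_lt_of_le h3 (Int.le_ceil x)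
  have h5 : ⌊x⌋ < ⌈x⌉ := by exact_mod_cast h4
  have h6 := Int.ceil_le_floor_add_one x
  omega

/-! ### The normal form of a point -/

lemma pt_eq_seg (a : Λ.Mor) (t : Fin k → ℝ)
    (ht : ∀ i, 0 ≤ t i ∧ t i ≤ (Λ.deg a i : ℝ)) :
    ∃ hs : ∀ i, 0 ≤ frac t i ∧
        frac t i ≤ (Λ.deg (Λ.seg a (fl t) (ce t)) i : ℝ),
      Λ.pt a t ht = Λ.pt (Λ.seg a (fl t) (ce t)) (frac t) hs ∧
      Λ.deg (Λ.seg a (fl t) (ce t)) ≤ 1 ∧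
      ∀ i, Λ.deg (Λ.seg a (fl t) (ce t)) i = 1 → 0 < frac t i ∧ frac t i < 1 := by
  have hmn : fl t ≤ ce t := fun i => fl_le_ce (t i)
  have hna : ce t ≤ Λ.deg a := fun i => ce_le_of_le (ht i).2
  set b := Λ.seg a (fl t) (ce t) with hbdef
  have hdb : Λ.deg b = ce t - fl t := deg_seg hmn hna
  have hdbi : ∀ i, Λ.deg b i = ce t i - fl t i := fun i => by
    rw [hdb]; rfl
  have hs0 : ∀ i, 0 ≤ frac t i := fun i =>
    sub_nonneg.2 (flR_le (ht i).1)
  have hs1 : ∀ i, frac t i < 1 := fun i =>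
    sub_fl_lt_one (t i) (hx := (ht i).1)
  have hcase : ∀ i, (frac t i = 0 → Λ.deg b i = 0) ∧
      (0 < frac t i → Λ.deg b i = 1) := by
    intro i
    constructor
    · intro h0
      have := ce_eq_fl_of_frac_eq_zero (ht i).1 h0
      rw [hdbi i]; unfold fl ce at *; omega
    · intro h0
      have := ce_eq_fl_add_one_of_frac_pos (ht i).1 h0
      rw [hdbi i]; unfold fl ce at *; omega
  have hs : ∀ i, 0 ≤ frac t i ∧ frac t i ≤ (Λ.deg b i : ℝ) := by
    intro i
    refine ⟨hs0 i, ?_⟩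
    rcases eq_or_lt_of_le (hs0 i) with h0 | h0
    · rw [← h0]; positivity
    · rw [(hcase i).2 h0]
      exact le_of_lt (by exact_mod_cast hs1 i)
  have hfls : fl (frac t) = 0 := by
    funext i
    have : ⌊frac t i⌋ = 0 := Int.floor_eq_zero_iff.2 ⟨hs0 i, hs1 i⟩
    simp [fl, this]
  have hces : ce (frac t) = Λ.deg b := by
    funext i
    rcases eq_or_lt_of_le (hs0 i) with h0 | h0
    · have h1 := (hcase i).1 h0.symm
      rw [h1]; unfold ce; rw [← h0]; simp
    · have h1 := (hcase i).2 h0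
      rw [h1]; unfold ce
      have hc1 : ⌈frac t i⌉ = 1 := by
        have h2 := hs1 i
        rw [Int.ceil_eq_iff]
        push_cast
        constructor <;> linarith
      rw [hc1]; rfl
  have hfrs : frac (frac t) = frac t := by
    funext i
    have h2 : ⌊frac t i⌋ = 0 := Int.floor_eq_zero_iff.2 ⟨hs0 i, hs1 i⟩
    show frac t i - ((⌊frac t i⌋.toNat : ℕ) : ℝ) = frac t i
    rw [h2]
    simp
  refine ⟨hs, ?_, ?_, ?_⟩
  · apply Quotient.sound
    refine ⟨?_, hfrs.symm⟩
    show Λ.seg a (fl t) (ce t) = Λ.seg b (fl (frac t)) (ce (frac t))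
    rw [hfls, hces, seg_zero_deg]
  · intro i
    rw [hdbi i]
    have h1 := ce_le_fl_add_one (ht i).1
    unfold fl ce at *
    simp only [Pi.one_apply]
    omega
  · intro i h1
    rcases eq_or_lt_of_le (hs0 i) with h0 | h0
    · exact absurd ((hcase i).1 h0.symm) (by omega)
    · exact ⟨h0, hs1 i⟩

/-! ### Skeleton lemmas -/

lemma skel'_mono {r r' : ℕ} (h : r ≤ r') : skel' Λ r ⊆ skel' Λ r' := by
  induction r', h using Nat.le_induction with
  | base => exact subset_rfl
  | succ n hn ih => exact ih.trans Set.subset_union_left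

lemma qcube_subset_skel {b : Λ.Mor} (hb : Λ.deg b ≤ 1) :
    Λ.Qcube b ⊆ Λ.skel k := by
  have hsum : ∑ i, Λ.deg b i ≤ k := by
    calc ∑ i, Λ.deg b i ≤ ∑ _i : Fin k, 1 :=
          Finset.sum_le_sum (fun i _ => hb i)
      _ = k := by simp
  have hsub : Λ.Qcube b ⊆ skel' Λ (∑ i, Λ.deg b i) := by
    cases hcs : ∑ i, Λ.deg b i with
    | zero =>
      have hdeg0 : Λ.deg b = 0 := by
        funext i
        have := (Finset.sum_eq_zero_iff).1 hcs i (Finset.mem_univ i)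
        simpa using this
      intro x hx
      exact Set.mem_biUnion hdeg0 hx
    | succ r =>
      intro x hx
      exact Set.mem_union_right _ (Set.mem_biUnion ⟨hb, hcs⟩ hx)
  exact hsub.trans (skel'_mono hsum)

lemma mem_skel_top (x : Λ.Real) : x ∈ Λ.skel k := by
  obtain ⟨⟨a, t, ht⟩, rfl⟩ := Quotient.exists_rep x
  obtain ⟨hs, heq, hdb1, hint⟩ := pt_eq_seg a t ht
  have hx : (Λ.pt a t ht) ∈ Λ.Qcube (Λ.seg a (fl t) (ce t)) :=
    ⟨frac t, hs, hint, heq⟩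
  exact qcube_subset_skel hdb1 hx

/-! ### Openness criterion -/

lemma isOpen_iff_skel (U : Set Λ.Real) :
    IsOpen U ↔ ∀ r ≤ k, IsOpen (Subtype.val ⁻¹' U : Set ↥(Λ.skel r)) := by
  constructor
  · intro hU r _
    exact hU.preimage continuous_subtype_val
  · intro h
    have h1 := h k le_rfl
    rw [isOpen_induced_iff] at h1
    obtain ⟨V, hV, hVU⟩ := h1
    have hUV : U = V := by
      ext x
      have hx := mem_skel_top (Λ := Λ) x
      constructor
      · intro hxU
        have h2 : (⟨x, hx⟩ : ↥(Λ.skel k)) ∈ Subtype.val ⁻¹' U := hxU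
        rw [← hVU] at h2; exact h2
      · intro hxV
        have h2 : (⟨x, hx⟩ : ↥(Λ.skel k)) ∈ Subtype.val ⁻¹' V := hxV
        rw [hVU] at h2; exact h2
    rw [hUV]; exact hV

/-! ### Density of the open cube -/

lemma cset_subset_closure_qcube {lam : Λ.Mor} (hlam : Λ.deg lam ≤ 1) :
    { x : Λ.Real | ∃ (t : Fin k → ℝ)
        (h : ∀ i, 0 ≤ t i ∧ t i ≤ (Λ.deg lam i : ℝ)), x = Λ.pt lam t h } ⊆
      closure (Λ.Qcube lam) := by
  rintro x ⟨t, h, rfl⟩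
  set θ : ℕ → ℝ := fun j => 1 / ((j : ℝ) + 2) with hθdef
  have hθpos : ∀ j, 0 < θ j := fun j => by positivity
  have hθle : ∀ j, θ j ≤ 1 / 2 := fun j => by
    rw [hθdef]
    have hj : (0 : ℝ) ≤ (j : ℝ) := Nat.cast_nonneg j
    exact one_div_le_one_div_of_le two_pos (by linarith)
  have hdeg : ∀ i, Λ.deg lam i = 0 ∨ Λ.deg lam i = 1 := fun i => by
    have h2 : Λ.deg lam i ≤ 1 := by simpa using hlam i
    omega
  set u : ℕ → Fin k → ℝ := fun j i =>
    (1 - θ j) * t i + θ j * ((Λ.deg lam i : ℝ) / 2) with hudef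
  have hubounds : ∀ j i, (Λ.deg lam i = 0 → u j i = 0) ∧
      (Λ.deg lam i = 1 → 0 < u j i ∧ u j i < 1) := by
    intro j i
    constructor
    · intro h0
      have ht0 : t i = 0 := le_antisymm (by have := (h i).2; rw [h0] at this; simpa using this) (h i).1
      simp [hudef, ht0, h0]
    · intro h1
      have ht1 : 0 ≤ t i ∧ t i ≤ 1 := by
        have := h i; rw [h1] at this; simpa using this
      have hθ1 := hθpos j
      have hθ2 := hθle j
      have hui : u j i = (1 - θ j) * t i + θ j / 2 := by
        simp only [hudef, h1]; push_cast; ring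
      have hp1 : 0 ≤ (1 - θ j) * t i :=
        mul_nonneg (by linarith) ht1.1
      have hp2 : (1 - θ j) * t i ≤ (1 - θ j) * 1 :=
        mul_le_mul_of_nonneg_left ht1.2 (by linarith)
      constructor
      · rw [hui]; linarith
      · rw [hui]; linarith
  have hu : ∀ j i, 0 ≤ u j i ∧ u j i ≤ (Λ.deg lam i : ℝ) := by
    intro j i
    rcases hdeg i with h0 | h1
    · rw [(hubounds j i).1 h0, h0]; norm_num
    · obtain ⟨ha, hb⟩ := (hubounds j i).2 h1
      rw [h1]; exact ⟨le_of_lt ha, by push_cast; linarith⟩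
  have hθtendsto : Filter.Tendsto θ Filter.atTop (nhds 0) := by
    have h2 : Filter.Tendsto (fun j : ℕ => ((j : ℝ) + 2)) Filter.atTop Filter.atTop :=
      Filter.tendsto_atTop_add_const_right _ 2 tendsto_natCast_atTop_atTop
    rw [hθdef]
    simpa only [one_div, Pi.inv_def] using h2.inv_tendsto_atTop
  have hutendsto : Filter.Tendsto u Filter.atTop (nhds t) := by
    rw [tendsto_pi_nhds]
    intro i
    have : Filter.Tendsto (fun j => u j i) Filter.atTop
        (nhds ((1 - 0) * t i + 0 * ((Λ.deg lam i : ℝ) / 2))) :=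
      ((tendsto_const_nhds.sub hθtendsto).mul tendsto_const_nhds).add
        (hθtendsto.mul tendsto_const_nhds)
    simpa using this
  set g : { s : Fin k → ℝ // ∀ i, 0 ≤ s i ∧ s i ≤ (Λ.deg lam i : ℝ) } → Λ.Real :=
    fun s => Quotient.mk Λ.ptSetoid ⟨lam, s⟩ with hgdef
  have hq : Continuous (Quotient.mk Λ.ptSetoid : Λ.Points → Λ.Real) :=
    continuous_quot_mk
  have hsig : Continuous (fun s : { s : Fin k → ℝ //
      ∀ i, 0 ≤ s i ∧ s i ≤ (Λ.deg lam i : ℝ) } => (⟨lam, s⟩ : Λ.Points)) :=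
    continuous_sigmaMk
      (σ := fun a : Λ.Mor => { s : Fin k → ℝ // ∀ i, 0 ≤ s i ∧ s i ≤ (Λ.deg a i : ℝ) })
  have hg : Continuous g := hq.comp hsig
  have hsub : Filter.Tendsto (fun j => (⟨u j, hu j⟩ :
      { s : Fin k → ℝ // ∀ i, 0 ≤ s i ∧ s i ≤ (Λ.deg lam i : ℝ) }))
      Filter.atTop (nhds ⟨t, h⟩) := by
    rw [tendsto_subtype_rng]
    exact hutendsto
  have hkey : Filter.Tendsto (fun j => g ⟨u j, hu j⟩) Filter.atTop
      (nhds (g ⟨t, h⟩)) := (hg.tendsto _).comp hsub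
  have hmem : ∀ j, g ⟨u j, hu j⟩ ∈ Λ.Qcube lam := by
    intro j
    exact ⟨u j, hu j, fun i h1 => (hubounds j i).2 h1, rfl⟩
  exact mem_closure_of_tendsto hkey (Filter.Eventually.of_forall hmem)

/-! ### Closedness of the closed cell -/

/-- Index set enumerating faces of `[0, d a]` matching segments of `lam`. -/
def FaceIdx (Λ : KGraph k) (lam a : Λ.Mor) :
    Set ((Fin k → ℕ) × (Fin k → ℕ) × (Fin k → ℕ) × (Fin k → ℕ)) :=
  { x | x.1 ≤ x.2.1 ∧ x.2.1 ≤ Λ.deg a ∧ x.2.2.1 ≤ x.2.2.2 ∧ x.2.2.2 ≤ Λ.deg lam ∧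
      x.2.1 - x.1 = x.2.2.2 - x.2.2.1 ∧ Λ.seg lam x.2.2.1 x.2.2.2 = Λ.seg a x.1 x.2.1 }

lemma faceIdx_finite (lam a : Λ.Mor) : (Λ.FaceIdx lam a).Finite := by
  have h1 : Λ.FaceIdx lam a ⊆
      Set.Iic (Λ.deg a) ×ˢ (Set.Iic (Λ.deg a) ×ˢ
        (Set.Iic (Λ.deg lam) ×ˢ Set.Iic (Λ.deg lam))) := by
    rintro ⟨m, n, p, q⟩ ⟨h1, h2, h3, h4, -, -⟩
    simp only [Set.mem_prod, Set.mem_Iic]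
    exact ⟨h1.trans h2, h2, h3.trans h4, h4⟩
  exact ((Set.finite_Iic _).prod ((Set.finite_Iic _).prod
    ((Set.finite_Iic _).prod (Set.finite_Iic _)))).subset h1

lemma mem_cset_iff (lam a : Λ.Mor) (t : Fin k → ℝ)
    (ht : ∀ i, 0 ≤ t i ∧ t i ≤ (Λ.deg a i : ℝ)) :
    (Λ.pt a t ht ∈ { x : Λ.Real | ∃ (s : Fin k → ℝ)
        (hs : ∀ i, 0 ≤ s i ∧ s i ≤ (Λ.deg lam i : ℝ)), x = Λ.pt lam s hs }) ↔
      t ∈ ⋃ x ∈ Λ.FaceIdx lam a,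
        Set.Icc (fun i => (x.1 i : ℝ)) (fun i => (x.2.1 i : ℝ)) := by
  constructor
  · rintro ⟨s, hs, heq⟩
    obtain ⟨h1, h2⟩ := Quotient.exact heq
    have hmn : fl t ≤ ce t := fun i => fl_le_ce (t i)
    have hna : ce t ≤ Λ.deg a := fun i => ce_le_of_le (ht i).2
    have hpq : fl s ≤ ce s := fun i => fl_le_ce (s i)
    have hql : ce s ≤ Λ.deg lam := fun i => ce_le_of_le (hs i).2
    have hdiff : ce t - fl t = ce s - fl s := by
      rw [← deg_seg hmn hna, ← deg_seg hpq hql, h1]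
    refine Set.mem_biUnion
      (show (fl t, ce t, fl s, ce s) ∈ Λ.FaceIdx lam a from
        ⟨hmn, hna, hpq, hql, hdiff, h1.symm⟩) ?_
    exact Set.mem_Icc.2 ⟨fun i => flR_le (ht i).1, fun i => le_ceR (ht i).1⟩
  · intro hmem
    simp only [Set.mem_iUnion, Set.mem_Icc] at hmem
    obtain ⟨⟨m, n, p, q⟩, ⟨hmn, hna, hpq, hqlam, hdiff, hseg⟩, hlo, hhi⟩ := hmem
    have hm' : m ≤ fl t := fun i => le_fl_of_le (hlo i)
    have hn' : ce t ≤ n := fun i => ce_le_of_le (hhi i)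
    have hmn' : fl t ≤ ce t := fun i => fl_le_ce (t i)
    set p' : Fin k → ℕ := fun i => p i + (fl t i - m i) with hp'def
    set q' : Fin k → ℕ := fun i => p i + (ce t i - m i) with hq'def
    have e1 : Λ.seg (Λ.seg a m n) (fl t - m) (ce t - m) = Λ.seg a (fl t) (ce t) :=
      seg_seg hm' hmn' hn' hna
    have hpp' : p ≤ p' := fun i => Nat.le_add_right _ _
    have hp'q' : p' ≤ q' := fun i => by
      have e : fl t i ≤ ce t i := hmn' i
      simp only [hp'def, hq'def]; omega
    have hq'q : q' ≤ q := fun i => by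
      have e1' : m i ≤ n i := hmn i
      have e2 : p i ≤ q i := hpq i
      have e3 : ce t i ≤ n i := hn' i
      have e4 : m i ≤ fl t i := hm' i
      have e5 : n i - m i = q i - p i := by
        have := congrFun hdiff i
        simpa using this
      simp only [hq'def]; omega
    have e2 : Λ.seg (Λ.seg lam p q) (p' - p) (q' - p) = Λ.seg lam p' q' :=
      seg_seg hpp' hp'q' hq'q hqlam
    have hsub1 : p' - p = fl t - m := by
      funext i; simp only [hp'def, Pi.sub_apply]; omega
    have hsub2 : q' - p = ce t - m := by
      funext i; simp only [hq'def, Pi.sub_apply]; omega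
    rw [hsub1, hsub2, hseg] at e2
    have e3 : Λ.seg a (fl t) (ce t) = Λ.seg lam p' q' := e1.symm.trans e2
    set s : Fin k → ℝ := fun i => frac t i + (p' i : ℝ) with hsdef
    have hfr0 : ∀ i, 0 ≤ frac t i := fun i => sub_nonneg.2 (flR_le (ht i).1)
    have hfr1 : ∀ i, frac t i < 1 := fun i => sub_fl_lt_one (t i) (hx := (ht i).1)
    have hfrz : ∀ i, ⌊frac t i⌋ = 0 := fun i =>
      Int.floor_eq_zero_iff.2 ⟨hfr0 i, hfr1 i⟩
    have hfls : ∀ i, ⌊s i⌋ = (p' i : ℤ) := fun i => by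
      show ⌊frac t i + (p' i : ℝ)⌋ = (p' i : ℤ)
      rw [Int.floor_add_natCast, hfrz i, zero_add]
    have hflsN : fl s = p' := by
      funext i; unfold fl; rw [hfls i]; simp
    have hq'cases : ∀ i, (frac t i = 0 → q' i = p' i) ∧
        (0 < frac t i → q' i = p' i + 1) := by
      intro i
      have e4 : m i ≤ fl t i := hm' i
      constructor
      · intro h0
        have hc := ce_eq_fl_of_frac_eq_zero (ht i).1 h0
        have e4' : m i ≤ ⌊t i⌋.toNat := e4
        show p i + (⌈t i⌉.toNat - m i) = p i + (⌊t i⌋.toNat - m i)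
        omega
      · intro h0
        have hc := ce_eq_fl_add_one_of_frac_pos (ht i).1 h0
        have e4' : m i ≤ ⌊t i⌋.toNat := e4
        show p i + (⌈t i⌉.toNat - m i) = p i + (⌊t i⌋.toNat - m i) + 1
        omega
    have hces : ce s = q' := by
      funext i
      rcases eq_or_lt_of_le (hfr0 i) with h0 | h0
      · have hsi : s i = ((p' i : ℕ) : ℝ) := by
          show frac t i + (p' i : ℝ) = _
          rw [← h0, zero_add]
        unfold ce
        rw [hsi, Int.ceil_natCast]
        simp [(hq'cases i).1 h0.symm]
      · have hc1 : ⌈frac t i⌉ = 1 := by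
          have h2 := hfr1 i
          rw [Int.ceil_eq_iff]
          push_cast
          constructor <;> linarith
        have hc2 : ⌈s i⌉ = (p' i : ℤ) + 1 := by
          show ⌈frac t i + (p' i : ℝ)⌉ = _
          rw [Int.ceil_add_natCast, hc1, add_comm]
        unfold ce
        rw [hc2, (hq'cases i).2 h0]
        omega
    have hfrs : frac s = frac t := by
      funext i
      show s i - ((⌊s i⌋.toNat : ℕ) : ℝ) = frac t i
      rw [hfls i]
      show s i - ((((p' i : ℤ)).toNat : ℕ) : ℝ) = frac t i
      rw [Int.toNat_natCast]
      show frac t i + (p' i : ℝ) - (p' i : ℝ) = frac t i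
      ring
    have hsbounds : ∀ i, 0 ≤ s i ∧ s i ≤ (Λ.deg lam i : ℝ) := by
      intro i
      have hb0 : 0 ≤ s i := add_nonneg (hfr0 i) (Nat.cast_nonneg _)
      refine ⟨hb0, ?_⟩
      have hqle : (q' i : ℝ) ≤ (Λ.deg lam i : ℝ) := by
        exact_mod_cast (hq'q i).trans (hqlam i)
      rcases eq_or_lt_of_le (hfr0 i) with h0 | h0
      · have hsi : s i = (p' i : ℝ) := by
          show frac t i + (p' i : ℝ) = _
          rw [← h0, zero_add]
        rw [hsi]
        have : (p' i : ℝ) ≤ (q' i : ℝ) := by exact_mod_cast hp'q' i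
        linarith
      · have h1 := (hq'cases i).2 h0
        have h2 := hfr1 i
        have : s i < (p' i : ℝ) + 1 := by
          show frac t i + (p' i : ℝ) < _
          linarith
        have h3 : ((p' i : ℝ) + 1) = (q' i : ℝ) := by
          rw [h1]; push_cast; ring
        linarith
    refine ⟨s, hsbounds, ?_⟩
    apply Quotient.sound
    refine ⟨?_, hfrs.symm⟩
    show Λ.seg a (fl t) (ce t) = Λ.seg lam (fl s) (ce s)
    rw [hflsN, hces]
    exact e3

lemma isClosed_cset (lam : Λ.Mor) :
    IsClosed { x : Λ.Real | ∃ (s : Fin k → ℝ)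
        (hs : ∀ i, 0 ≤ s i ∧ s i ≤ (Λ.deg lam i : ℝ)), x = Λ.pt lam s hs } := by
  have hqm : Topology.IsQuotientMap (Quotient.mk Λ.ptSetoid : Λ.Points → Λ.Real) :=
    isQuotientMap_quot_mk
  refine hqm.isClosed_preimage.1 ?_
  refine isClosed_sigma_iff.2 fun a => ?_
  have heq : Sigma.mk a ⁻¹' (Quotient.mk Λ.ptSetoid ⁻¹'
      { x : Λ.Real | ∃ (s : Fin k → ℝ)
        (hs : ∀ i, 0 ≤ s i ∧ s i ≤ (Λ.deg lam i : ℝ)), x = Λ.pt lam s hs }) =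
      Subtype.val ⁻¹' (⋃ x ∈ Λ.FaceIdx lam a,
        Set.Icc (fun i => (x.1 i : ℝ)) (fun i => (x.2.1 i : ℝ))) := by
    ext ⟨t, htp⟩
    exact mem_cset_iff lam a t htp
  exact heq ▸ ((faceIdx_finite lam a).isClosed_biUnion
    (fun x _ => isClosed_Icc)).preimage continuous_subtype_val

end KGraph



/-- For each `λ` with `d(λ) ≤ 1_k`, the closure of the open
cube `Q_λ` in `X_Λ` is `{[λ,t] : 0 ≤ t ≤ d(λ)}`; and a set `U ⊆ X_Λ` is open
iff `U ∩ X_Λ^r` is relatively open in the skeleton `X_Λ^r` for each `r ≤ k`. -/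
theorem closure_of_cube_and_weak_topology (k : ℕ) (Λ : KGraph k) :
    (∀ lam : Λ.Mor, Λ.deg lam ≤ 1 →
      closure (Λ.Qcube lam) =
        { x : Λ.Real | ∃ (t : Fin k → ℝ)
            (h : ∀ i, 0 ≤ t i ∧ t i ≤ (Λ.deg lam i : ℝ)), x = Λ.pt lam t h }) ∧
    (∀ U : Set Λ.Real, IsOpen U ↔
      ∀ r ≤ k, IsOpen (Subtype.val ⁻¹' U : Set ↥(Λ.skel r))) := by
  constructor
  · intro lam hlam
    apply Set.Subset.antisymm
    · refine closure_minimal ?_ (KGraph.isClosed_cset lam)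
      rintro x ⟨t, h, hint, rfl⟩
      exact ⟨t, h, rfl⟩
    · exact KGraph.cset_subset_closure_qcube hlam
  · exact KGraph.isOpen_iff_skel
end

section
/- Let G be a connected groupoid, i.e. a small groupoid such that vGu ≠ ∅ for all units u, v. Let S ⊆ G × G be a set of pairs of parallel morphisms (i.e. s(α) = s(β) and r(α) = r(β) for all (α,β) ∈ S), let R be the congruence relation on G generated by S, let H = G/R be the quotient groupoid and Q : G → H the quotient functor. Fix a unit u of G, and for each unit v choose κ_v ∈ vGu with κ_u = u. Let K be the normal subgroup of the isotropy group G(u) = uGu generated by {κ_{r(α)}⁻¹ α β⁻¹ κ_{r(α)} : (α,β) ∈ S}. Then the isotropy group H(u) of the quotient is isomorphic to G(u)/K; more precisely, Q restricts to a surjective group homomorphism G(u) → H(u) whose kernel is K. -/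
open CategoryTheory

/-- Let `G` be a connected groupoid, `S` a set of pairs of
parallel morphisms, `R` the congruence generated by `S` (so that the quotient
groupoid `H = G/R` is `CategoryTheory.Quotient S`, whose hom-sets are the
quotients of those of `G` by the congruence generated by `S`, and the quotient
functor is `Quotient.functor S`).  Fix a unit `u` and `κ_v ∈ vGu` for each unit
`v`, with `κ_u = 𝟙 u`, and let `K` be the normal subgroup of the isotropy group
`G(u) = uGu` generated by `{κ_{r(α)}⁻¹ α β⁻¹ κ_{r(α)} : (α,β) ∈ S}`.  Then the
quotient functor restricts to a surjective (automatically multiplicative) map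
`G(u) → H(u)` whose kernel is `K`; that is, `H(u) ≅ G(u)/K`. -/
theorem isotropy_of_quotient_groupoid
    {G : Type} [Groupoid G]
    (hconn : ∀ a b : G, Nonempty (a ⟶ b))
    (S : HomRel G) (u : G)
    (κ : ∀ v : G, u ⟶ v) (hκu : κ u = 𝟙 u) :
    Function.Surjective
      (fun γ : u ⟶ u => (Quotient.functor S).map γ) ∧
    ∀ γ : u ⟶ u,
      (Quotient.functor S).map γ = 𝟙 ((Quotient.functor S).obj u) ↔
      γ ∈ Subgroup.normalClosure
        { x : u ⟶ u | ∃ (a b : G) (α β : a ⟶ b), S α β ∧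
            x = κ b ≫ Groupoid.inv β ≫ α ≫ Groupoid.inv (κ b) } := by
  set Q := Quotient.functor S with hQ
  set K := Subgroup.normalClosure
        { x : u ⟶ u | ∃ (a b : G) (α β : a ⟶ b), S α β ∧
            x = κ b ≫ Groupoid.inv β ≫ α ≫ Groupoid.inv (κ b) } with hK
  constructor
  · intro f
    obtain ⟨γ, hγ⟩ := Q.map_surjective f
    exact ⟨γ, hγ⟩
  · -- key computation: one `CompClosure` step preserves the coset of `K`
    have key : ∀ {a b : G} (f g : a ⟶ b), HomRel.CompClosure S f g →
        (κ a ≫ f ≫ Groupoid.inv (κ b)) * (κ a ≫ g ≫ Groupoid.inv (κ b))⁻¹ ∈ K := by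
      intro a b f g hc
      cases hc with
      | intro _ _ p m₁ m₂ q h =>
        have hgen : (κ _ ≫ Groupoid.inv m₂ ≫ m₁ ≫ Groupoid.inv (κ _)) ∈ K :=
          Subgroup.subset_normalClosure ⟨_, _, m₁, m₂, h, rfl⟩
        have hc2 := (Subgroup.normalClosure_normal).conj_mem _ hgen
          (κ a ≫ p ≫ m₂ ≫ Groupoid.inv (κ _))
        convert hc2 using 1
        simp [Groupoid.vertexGroup_mul, Groupoid.vertexGroup_inv, Groupoid.inv_eq_inv]
    have main : ∀ f g : u ⟶ u, Relation.EqvGen (fun f g : u ⟶ u => HomRel.CompClosure S f g) f g →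
        f * g⁻¹ ∈ K := by
      intro f g hfg
      induction hfg with
      | rel f g h =>
        have := key f g h
        simpa [hκu, Groupoid.vertexGroup_mul, Groupoid.vertexGroup_inv,
          Groupoid.inv_eq_inv] using this
      | refl f => simpa using K.one_mem
      | symm f g h ih => simpa using K.inv_mem ih
      | trans f g k h1 h2 ih1 ih2 =>
        have := K.mul_mem ih1 ih2
        simpa [mul_assoc] using this
    -- the subgroup of endomorphisms killed by `Q`
    have hone : Q.map (𝟙 u) = 𝟙 (Q.obj u) := Q.map_id u
    let N : Subgroup (u ⟶ u) :=
      { carrier := {γ : u ⟶ u | Q.map γ = 𝟙 (Q.obj u)}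
        one_mem' := hone
        mul_mem' := by
          intro x y hx hy
          show Q.map (x ≫ y) = 𝟙 (Q.obj u)
          rw [Q.map_comp, hx, hy, Category.comp_id]
        inv_mem' := by
          intro x hx
          show Q.map (Groupoid.inv x) = 𝟙 (Q.obj u)
          have : Q.map (Groupoid.inv x ≫ x) = 𝟙 (Q.obj u) := by
            rw [Groupoid.inv_comp]; exact hone
          rwa [Q.map_comp, hx, Category.comp_id] at this }
    haveI hN : N.Normal := by
      constructor
      intro n hn g
      show Q.map ((g ≫ n) ≫ Groupoid.inv g) = 𝟙 (Q.obj u)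
      have hgg : Q.map (g ≫ Groupoid.inv g) = 𝟙 (Q.obj u) := by
        rw [Groupoid.comp_inv]; exact hone
      have hn' : Q.map n = 𝟙 (Q.obj u) := hn
      rw [Q.map_comp, Q.map_comp, hn', Category.comp_id, ← Q.map_comp, hgg]
    have hsub : { x : u ⟶ u | ∃ (a b : G) (α β : a ⟶ b), S α β ∧
            x = κ b ≫ Groupoid.inv β ≫ α ≫ Groupoid.inv (κ b) } ⊆ N := by
      rintro x ⟨a, b, α, β, hαβ, rfl⟩
      show Q.map (κ b ≫ Groupoid.inv β ≫ α ≫ Groupoid.inv (κ b)) = 𝟙 (Q.obj u)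
      have h2 : Q.map (Groupoid.inv β ≫ α) = Q.map (𝟙 b) := by
        rw [Q.map_comp, hQ, CategoryTheory.Quotient.sound S hαβ, ← (Quotient.functor S).map_comp,
          Groupoid.inv_comp]
      calc Q.map (κ b ≫ Groupoid.inv β ≫ α ≫ Groupoid.inv (κ b))
          = Q.map (κ b) ≫ Q.map (Groupoid.inv β ≫ α) ≫ Q.map (Groupoid.inv (κ b)) := by
            simp only [Q.map_comp, Category.assoc]
        _ = Q.map (κ b) ≫ Q.map (Groupoid.inv (κ b)) := by
            rw [h2, Q.map_id, Category.id_comp]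
        _ = 𝟙 (Q.obj u) := by rw [← Q.map_comp, Groupoid.comp_inv, Q.map_id]
    have hle : K ≤ N := Subgroup.normalClosure_le_normal hsub
    intro γ
    constructor
    · intro hγ
      have he : Relation.EqvGen (fun f g : u ⟶ u => HomRel.CompClosure S f g) γ (𝟙 u) := by
        apply Quot.eqvGen_exact
        exact hγ.trans hone.symm
      have := main γ (𝟙 u) he
      simpa [Groupoid.vertexGroup_inv, Groupoid.vertexGroup_mul] using this
    · intro hγ
      exact hle hγ
end
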